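/- Let R be a 2-torsion free ring with unity and r ≥ 2 an integer. If T : M_r(R) → M_r(R) is an additive mapping satisfying 3T(xyx) = T(x)yx + xT(y)x + xyT(x) for all x, y ∈ M_r(R), then there exists α in the center Z(R) of R such that T(x) = α·x for all x ∈ M_r(R); in particular, T is a two-sided centralizer. -/

import Mathlib

theorem centralizer_xyx_three_matrix {R : Type*} [Ring R]
    (htf : ∀ a : R, 2 • a = 0 → a = 0)
    (r : ℕ) (hr : 2 ≤ r)
    (T : Matrix (Fin r) (Fin r) R → Matrix (Fin r) (Fin r) R)
    (hadd : ∀ x y, T (x + y) = T x + T y)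
    (h : ∀ x y, 3 • T (x * y * x) = T x * y * x + x * T y * x + x * y * T x) :
    (∃ α ∈ Subring.center R, ∀ x, T x = α • x) ∧
      ∀ x y, T (x * y) = T x * y ∧ T (x * y) = x * T y := by
  set a := T 1 with ha_def
  -- torsion-freeness of matrices
  have htfM : ∀ M : Matrix (Fin r) (Fin r) R, 2 • M = 0 → M = 0 := by
    intro M hM
    ext i j
    have h2 : (2 • M) i j = (0 : Matrix (Fin r) (Fin r) R) i j := by rw [hM]
    simp only [Matrix.smul_apply, Matrix.zero_apply] at h2
    exact htf _ h2
  -- 2 T y = a y + y a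
  have hB : ∀ y : Matrix (Fin r) (Fin r) R, 2 • T y = a * y + y * a := by
    intro y
    have h1 := h 1 y
    simp only [one_mul, mul_one] at h1
    have key : 2 • T y + T y = (a * y + y * a) + T y := by
      have h3 : (3 : ℕ) • T y = 2 • T y + T y := by
        rw [show (3:ℕ) = 2 + 1 by norm_num, add_smul, one_smul]
      rw [← h3, h1, ← ha_def]
      abel
    exact add_right_cancel key
  -- the key relation
  have hstar : ∀ x y : Matrix (Fin r) (Fin r) R, a*(x*y*x) + x*y*x*a = x*a*y*x + x*y*a*x := by
    intro x y
    have e1 : (6:ℕ) • T (x*y*x) = (3:ℕ) • (a*(x*y*x) + x*y*x*a) := by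
      rw [show (6:ℕ) = 3*2 by norm_num, mul_smul, hB]
    have e2 : (6:ℕ) • T (x*y*x) =
        (2 • T x)*y*x + x*(2 • T y)*x + x*y*(2 • T x) := by
      rw [show (6:ℕ) = 2*3 by norm_num, mul_smul, h x y]
      noncomm_ring
    rw [hB x, hB y] at e2
    have e3 : (2:ℕ) • ((a*(x*y*x) + x*y*x*a) - (x*a*y*x + x*y*a*x)) =
        (3:ℕ) • (a*(x*y*x) + x*y*x*a) -
          ((a*x+x*a)*y*x + x*(a*y+y*a)*x + x*y*(a*x+x*a)) := by
      noncomm_ring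
    rw [← e1, ← e2, sub_self] at e3
    exact sub_eq_zero.mp (htfM _ e3)
  -- commutators with a are central
  have hcomm : ∀ x y : Matrix (Fin r) (Fin r) R, (a*x - x*a)*y = y*(a*x - x*a) := by
    intro x y
    have e1 := hstar (x+1) y
    have e2 := hstar x y
    have key : (a*x - x*a)*y - y*(a*x - x*a) =
        ((a*((x+1)*y*(x+1)) + (x+1)*y*(x+1)*a) - ((x+1)*a*y*(x+1) + (x+1)*y*a*(x+1)))
        - ((a*(x*y*x) + x*y*x*a) - (x*a*y*x + x*y*a*x)) := by noncomm_ring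
    rw [e1, e2, sub_self, sub_self, sub_zero] at key
    exact sub_eq_zero.mp key
  have hcentral : ∀ x : Matrix (Fin r) (Fin r) R, (a*x - x*a) ∈ Set.range (Matrix.scalar (Fin r)) := by
    intro x
    exact Matrix.mem_range_scalar_iff_commute_single'.mpr
      fun i j => (hcomm x _).symm
  -- indices
  have h0 : 0 < r := by omega
  have h1r : 1 < r := by omega
  set i0 : Fin r := ⟨0, h0⟩ with hi0
  set i1 : Fin r := ⟨1, h1r⟩ with hi1
  have hne : i1 ≠ i0 := by simp [hi0, hi1, Fin.ext_iff]
  set E : Matrix (Fin r) (Fin r) R := Matrix.single i0 i1 (1:R) with hE_def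
  have hE2 : E * E = 0 := by rw [hE_def]; exact Matrix.single_mul_single_of_ne (i := i0) (j := i1) (k := i0) (c := (1:R)) hne 1
  -- c E = 0
  have hcE : a*E - E*a = 0 := by
    obtain ⟨γ, hγ⟩ := hcentral E
    have hd : a*(E*E) - (E*E)*a = (a*E - E*a)*E + E*(a*E - E*a) := by noncomm_ring
    rw [hE2, mul_zero, zero_mul, sub_zero, ← hcomm E E, ← two_smul ℕ] at hd
    have hz : (a*E - E*a) * E = 0 := htfM _ hd.symm
    rw [← hγ] at hz
    have hent : ((Matrix.scalar (Fin r) γ) * E) i0 i1 = (0: Matrix (Fin r) (Fin r) R) i0 i1 := by rw [hz]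
    simp only [Matrix.scalar_apply, Matrix.diagonal_mul, Matrix.zero_apply, hE_def,
      Matrix.single_apply_same, mul_one] at hent
    rw [← hγ, hent]
    simp
  -- c x = 0 for all x
  have hax : ∀ x : Matrix (Fin r) (Fin r) R, a*x = x*a := by
    intro x
    obtain ⟨α, hα⟩ := hcentral x
    obtain ⟨β, hβ⟩ := hcentral (x*E)
    have hd : a*(x*E) - (x*E)*a = (a*x - x*a)*E + x*(a*E - E*a) := by noncomm_ring
    rw [hcE, mul_zero, add_zero, ← hβ, ← hα] at hd
    -- entry (i0,i1) gives α = 0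
    have hent2 : (Matrix.scalar (Fin r) β) i0 i1 = ((Matrix.scalar (Fin r) α) * E) i0 i1 := by
      rw [hd]
    simp only [Matrix.scalar_apply, Matrix.diagonal_mul, Matrix.diagonal_apply_ne _ hne.symm,
      hE_def, Matrix.single_apply_same, mul_one] at hent2
    have h0' : a*x - x*a = 0 := by rw [← hα, ← hent2, map_zero]
    exact sub_eq_zero.mp h0'
  -- T y = a * y
  have hT : ∀ y : Matrix (Fin r) (Fin r) R, T y = a * y := by
    intro y
    have := hB y
    rw [← hax y, ← two_smul ℕ] at this
    have h2 : (2:ℕ) • (T y - a * y) = 0 := by rw [smul_sub, this, sub_self]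
    exact sub_eq_zero.mp (htfM _ h2)
  -- a is a scalar matrix with central entry
  obtain ⟨α₀, hα₀⟩ := Matrix.mem_range_scalar_of_commute_single
    (fun i j _ => (hax _).symm)
  have hα₀c : α₀ ∈ Subring.center R := by
    rw [Subring.mem_center_iff]
    intro g
    have := hax (Matrix.scalar (Fin r) g)
    rw [← hα₀] at this
    have hent : ((Matrix.scalar (Fin r) α₀) * (Matrix.scalar (Fin r) g)) i0 i0 =
        ((Matrix.scalar (Fin r) g) * (Matrix.scalar (Fin r) α₀)) i0 i0 := by rw [this]
    simpa using hent.symm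
  refine ⟨⟨α₀, hα₀c, fun x => ?_⟩, fun x y => ⟨?_, ?_⟩⟩
  · rw [hT x, ← hα₀]
    ext i j
    simp [Matrix.scalar_apply, Matrix.diagonal_mul]
  · rw [hT, hT, mul_assoc]
  · rw [hT, hT, ← mul_assoc, hax x, mul_assoc]
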